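/- For any group G, any element g ∈ G, and any positive integer i, the subgroup generated by g together with the i-th term Z_i(G) of the upper central series is nilpotent of class at most i. -/

import Mathlib

open Subgroup
open scoped commutatorElement

/-- Commutators drop the upper central series by one step (with truncated
subtraction at zero, since `Z_0 = ⊥`). -/
private lemma ucs_comm_step {G : Type*} [Group G] (m : ℕ) :
    ⁅Subgroup.upperCentralSeries G m, (⊤ : Subgroup G)⁆ ≤ Subgroup.upperCentralSeries G (m - 1) := by
  cases m with
  | zero =>
    rw [Subgroup.upperCentralSeries_zero, Subgroup.commutator_le]
    intro x hx y _
    rw [Subgroup.mem_bot.mp hx]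
    simp
  | succ n =>
    rw [Subgroup.commutator_le]
    intro x hx y _
    simpa [commutatorElement_def, mul_assoc] using Subgroup.mem_upperCentralSeries_succ_iff.mp hx y

/-- The subgroup generated by one element together with the center is abelian. -/
private lemma zpowers_sup_center_comm {Q : Type*} [Group Q] (q : Q) :
    ∀ x ∈ zpowers q ⊔ center Q, ∀ y ∈ zpowers q ⊔ center Q, Commute x y := by
  have h1 : zpowers q ⊔ center Q ≤ centralizer {q} := by
    refine sup_le (zpowers_le.mpr ?_) (center_le_centralizer _)
    exact Subgroup.mem_centralizer_iff.mpr (by rintro g rfl; rfl)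
  have h2 : zpowers q ⊔ center Q ≤ centralizer (zpowers q ⊔ center Q : Subgroup Q) := by
    refine sup_le (zpowers_le.mpr ?_) (center_le_centralizer _)
    refine Subgroup.mem_centralizer_iff.mpr fun k hk => ?_
    exact (Subgroup.mem_centralizer_iff.mp (h1 hk) q rfl).symm
  intro x hx y hy
  exact Subgroup.mem_centralizer_iff.mp (h2 hy) x hx

theorem zpowers_sup_upperCentralSeries_nilpotent {G : Type*} [Group G]
    (g : G) (i : ℕ) (hi : 0 < i) :
    (⊤ : Subgroup (↥(Subgroup.zpowers g ⊔ Subgroup.upperCentralSeries G i))).lowerCentralSeries i = ⊥ := by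
  obtain ⟨n, rfl⟩ : ∃ n, i = n + 1 := ⟨i - 1, (Nat.succ_pred_eq_of_pos hi).symm⟩
  set H : Subgroup G := Subgroup.zpowers g ⊔ Subgroup.upperCentralSeries G (n + 1) with hH
  -- Step 1: `⁅H, H⁆ ≤ Z_n(G)`.
  have hbase : ⁅H, H⁆ ≤ Subgroup.upperCentralSeries G n := by
    set N := Subgroup.upperCentralSeries G n
    let π := QuotientGroup.mk' N
    have hker : ∀ x : G, π x = 1 ↔ x ∈ N := by
      intro x
      rw [← MonoidHom.mem_ker, QuotientGroup.ker_mk']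
    have hZc : (Subgroup.upperCentralSeries G (n + 1)).map π ≤ center (G ⧸ N) := by
      rintro - ⟨z, hz, rfl⟩
      rw [Subgroup.mem_center_iff]
      intro y
      obtain ⟨w, rfl⟩ := QuotientGroup.mk'_surjective N y
      have : π ⁅z, w⁆ = 1 := by
        rw [hker]
        simpa [commutatorElement_def, mul_assoc] using Subgroup.mem_upperCentralSeries_succ_iff.mp hz w
      rw [map_commutatorElement] at this
      exact (commutatorElement_eq_one_iff_commute.mp this).symm
    have hmap : H.map π ≤ zpowers (π g) ⊔ center (G ⧸ N) := by
      rw [hH, Subgroup.map_sup, ← MonoidHom.map_zpowers]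
      exact sup_le_sup le_rfl hZc
    rw [Subgroup.commutator_le]
    intro x hx y hy
    rw [← hker, map_commutatorElement, commutatorElement_eq_one_iff_commute]
    exact zpowers_sup_center_comm (π g) _ (hmap ⟨x, hx, rfl⟩) _ (hmap ⟨y, hy, rfl⟩)
  -- Step 2: induction, `γ_{k+1}(H) ≤ Z_{n-k}(G)` (as subgroups of `G`).
  have key : ∀ k : ℕ,
      ((⊤ : Subgroup ↥H).lowerCentralSeries (k + 1)).map H.subtype ≤ Subgroup.upperCentralSeries G (n - k) := by
    intro k
    induction k with
    | zero =>
      have heq : ((⊤ : Subgroup ↥H).lowerCentralSeries (0 + 1)).map H.subtype = ⁅H, H⁆ := by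
        rw [zero_add, Subgroup.top_lowerCentralSeries_one, _root_.commutator_def, Subgroup.map_commutator,
          ← MonoidHom.range_eq_map, Subgroup.range_subtype]
      rw [heq, Nat.sub_zero]
      exact hbase
    | succ k ih =>
      have hstep : ((⊤ : Subgroup ↥H).lowerCentralSeries (k + 2)).map H.subtype ≤
          ⁅Subgroup.upperCentralSeries G (n - k), (⊤ : Subgroup G)⁆ := by
        show (⁅(⊤ : Subgroup ↥H).lowerCentralSeries (k + 1), (⊤ : Subgroup ↥H)⁆).map H.subtype ≤ _
        rw [Subgroup.map_commutator]
        exact Subgroup.commutator_mono ih le_top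
      calc ((⊤ : Subgroup ↥H).lowerCentralSeries (k + 2)).map H.subtype
          ≤ Subgroup.upperCentralSeries G (n - k - 1) := hstep.trans (ucs_comm_step _)
        _ = Subgroup.upperCentralSeries G (n - (k + 1)) := by rw [Nat.sub_sub]
  have := key n
  rw [Nat.sub_self, Subgroup.upperCentralSeries_zero, le_bot_iff, Subgroup.map_eq_bot_iff,
    Subgroup.ker_subtype, le_bot_iff] at this
  exact this
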